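/- Let m be odd, gcd(i,m)=1, a ∈ F_{2^m}^*. The map L(x,y) = (x + a·tr(x/a) + a·tr(a^{-(2^i+1)}y), y + a^{2^i+1}·tr(a^{-(2^i+1)}y) + a^{2^i+1}·tr(x/a)) on F_{2^m}^2 is a linear involution (hence a permutation). -/

import Mathlib

/-- For `m` odd, `gcd(i,m) = 1` and `a ≠ 0`, the map
`𝓛(x,y) = (x + a·tr(x/a) + a·tr(a^{-(2^i+1)} y),
           y + a^{2^i+1}·tr(a^{-(2^i+1)} y) + a^{2^i+1}·tr(x/a))`
on `𝔽_{2^m}²` is a linear involution (hence a permutation). -/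
theorem stmt_14 (m i : ℕ) (hm : Odd m) (hi : Nat.gcd i m = 1)
    (a : GaloisField 2 m) (ha : a ≠ 0) :
    IsLinearMap (ZMod 2)
      (fun p : GaloisField 2 m × GaloisField 2 m =>
        (p.1 + a * algebraMap (ZMod 2) (GaloisField 2 m)
            (Algebra.trace (ZMod 2) (GaloisField 2 m) (p.1 / a)) +
          a * algebraMap (ZMod 2) (GaloisField 2 m)
            (Algebra.trace (ZMod 2) (GaloisField 2 m) (a⁻¹ ^ (2 ^ i + 1) * p.2)),
         p.2 + a ^ (2 ^ i + 1) * algebraMap (ZMod 2) (GaloisField 2 m)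
            (Algebra.trace (ZMod 2) (GaloisField 2 m) (a⁻¹ ^ (2 ^ i + 1) * p.2)) +
          a ^ (2 ^ i + 1) * algebraMap (ZMod 2) (GaloisField 2 m)
            (Algebra.trace (ZMod 2) (GaloisField 2 m) (p.1 / a)))) ∧
    ∀ p : GaloisField 2 m × GaloisField 2 m,
      (fun p : GaloisField 2 m × GaloisField 2 m =>
        (p.1 + a * algebraMap (ZMod 2) (GaloisField 2 m)
            (Algebra.trace (ZMod 2) (GaloisField 2 m) (p.1 / a)) +
          a * algebraMap (ZMod 2) (GaloisField 2 m)
            (Algebra.trace (ZMod 2) (GaloisField 2 m) (a⁻¹ ^ (2 ^ i + 1) * p.2)),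
         p.2 + a ^ (2 ^ i + 1) * algebraMap (ZMod 2) (GaloisField 2 m)
            (Algebra.trace (ZMod 2) (GaloisField 2 m) (a⁻¹ ^ (2 ^ i + 1) * p.2)) +
          a ^ (2 ^ i + 1) * algebraMap (ZMod 2) (GaloisField 2 m)
            (Algebra.trace (ZMod 2) (GaloisField 2 m) (p.1 / a))))^[2] p = p := by
  classical
  have hm0 : m ≠ 0 := by rintro rfl; simp [Nat.odd_iff] at hm
  have hfin : Module.finrank (ZMod 2) (GaloisField 2 m) = m := GaloisField.finrank 2 hm0
  set tr : GaloisField 2 m →ₗ[ZMod 2] ZMod 2 := Algebra.trace (ZMod 2) (GaloisField 2 m) with htr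
  set f : ZMod 2 →+* GaloisField 2 m := algebraMap (ZMod 2) (GaloisField 2 m) with hf
  have htrf : ∀ c : ZMod 2, tr (f c) = c := by
    intro c
    rw [htr, hf, Algebra.trace_algebraMap, hfin, nsmul_eq_mul,
      ← ZMod.natCast_mod m 2, Nat.odd_iff.mp hm]
    simp
  have h2 : (2 : GaloisField 2 m) = 0 := CharTwo.two_eq_zero
  have h2' : ∀ c : ZMod 2, c + c = 0 := fun c => CharTwo.add_self_eq_zero c
  set e := 2 ^ i + 1 with he
  have hae : a ^ e ≠ 0 := pow_ne_zero e ha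
  refine ⟨⟨fun p q => ?_, fun c p => ?_⟩, fun p => ?_⟩
  · apply Prod.ext <;>
      simp only [Prod.fst_add, Prod.snd_add, add_div, mul_add, map_add] <;> ring
  · simp only [Prod.smul_fst, Prod.smul_snd, Prod.smul_mk, smul_eq_mul]
    obtain rfl | rfl : c = 0 ∨ c = 1 := by fin_cases c; exacts [Or.inl rfl, Or.inr rfl]
    all_goals
      simp [zero_smul, one_smul, zero_div, map_zero, Prod.smul_mk]
  · simp only [Function.iterate_succ, Function.iterate_zero, Function.comp_apply, id_eq]
    obtain ⟨x, y⟩ := p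
    simp only
    set u := tr (x / a) with hu
    set v := tr (a⁻¹ ^ e * y) with hv
    have key1 : tr ((x + a * f u + a * f v) / a) = v := by
      rw [add_div, add_div, mul_div_cancel_left₀ _ ha, mul_div_cancel_left₀ _ ha,
        map_add, map_add, ← hu, htrf, htrf, h2' u, zero_add]
    have key2 : tr (a⁻¹ ^ e * (y + a ^ e * f v + a ^ e * f u)) = u := by
      have hcan : a⁻¹ ^ e * a ^ e = 1 := by
        rw [inv_pow, inv_mul_cancel₀ hae]
      rw [mul_add, mul_add, ← mul_assoc, hcan, one_mul, ← mul_assoc, hcan, one_mul,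
        map_add, map_add, ← hv, htrf, htrf, h2' v, zero_add]
    rw [key1, key2, Prod.mk.injEq]
    constructor
    · linear_combination (a * f u + a * f v) * h2
    · linear_combination (a ^ e * f u + a ^ e * f v) * h2
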